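/- (Theorem 6, factorization part: closed form for decomposable graphs.) Let G be a decomposable graph on {1,…,p} with edge set E for which the identity ordering is a perfect elimination ordering, and let U be symmetric positive definite. Then c_j > 0 for every 1 ≤ j ≤ p, and for every unit lower triangular p×p matrix L with L_{ij} = 0 whenever i > j and (i,j) ∉ E, and every D = diag(D_1,…,D_p) with D_j > 0, tr(L D L^T U) = ∑_{j=1}^{p} D_j [ (L_{I_j} − e_j)^T U^{≻j} (L_{I_j} − e_j) + c_j ] (terms with N^{≻j} = ∅ being D_j U_{jj}). Consequently, the unnormalized generalized G-Wishart density in Cholesky coordinates factorizes as ∏_{j=1}^{p} D_j^{(δ_j+2ν_j)/2} exp(−(D_j/2)[(L_{I_j} − e_j)^T U^{≻j}(L_{I_j} − e_j) + c_j]), so the pairs (L_{I_j}, D_j) are mutually independent, with L_{I_j} given D_j Gaussian N(e_j, (U^{≻j})^{−1}/D_j) and D_j Gamma with shape (ν_j+δ_j)/2 + 1 and rate c_j/2. -/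

import Mathlib

open SimpleGraph

variable {V : Type*}

/-- One step of the elimination/triangulation process: at step `k` (0-based) the vertex with
label `k` is eliminated, and all pairs of its neighbours with larger labels are joined. -/
def triStep {n : ℕ} (σ : V ≃ Fin n) (H : SimpleGraph V) (k : ℕ) : SimpleGraph V where
  Adj u v := H.Adj u v ∨
    (u ≠ v ∧ ∃ hk : k < n, k < (σ u : ℕ) ∧ k < (σ v : ℕ) ∧
      H.Adj u (σ.symm ⟨k, hk⟩) ∧ H.Adj v (σ.symm ⟨k, hk⟩))
  symm := by
    refine ⟨?_⟩
    rintro u v (h | ⟨hne, hk, h1, h2, h3, h4⟩)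
    · exact Or.inl h.symm
    · exact Or.inr ⟨hne.symm, hk, h2, h1, h4, h3⟩
  loopless := by
    refine ⟨?_⟩
    rintro u (h | ⟨hne, _⟩)
    · exact H.loopless.irrefl u h
    · exact hne rfl

/-- The sequence of graphs `E_0, E_1, …` in the triangulation process. -/
def triSeq {n : ℕ} (σ : V ≃ Fin n) (G : SimpleGraph V) : ℕ → SimpleGraph V
  | 0 => G
  | k + 1 => triStep σ (triSeq σ G k) k

/-- The triangulation `D^σ(G)` of `G` under the ordering `σ` (`p − 2` elimination steps). -/
def triangulation {n : ℕ} (σ : V ≃ Fin n) (G : SimpleGraph V) : SimpleGraph V :=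
  triSeq σ G (n - 2)

/-- `σ` is a perfect elimination ordering of `G`: for every `j`, the vertex `σ⁻¹(j)` together
with its higher-labelled neighbours forms a clique. -/
def IsPerfectElimOrdering {n : ℕ} (σ : V ≃ Fin n) (G : SimpleGraph V) : Prop :=
  ∀ j : Fin n,
    G.IsClique ({σ.symm j} ∪ {v : V | (j : ℕ) < (σ v : ℕ) ∧ G.Adj v (σ.symm j)})

/-- A graph is decomposable (chordal) if it has no induced cycle of length `≥ 4`. -/
def IsDecomposable (G : SimpleGraph V) : Prop :=
  ∀ n : ℕ, 4 ≤ n → IsEmpty (SimpleGraph.cycleGraph n ↪g G)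

/-- `σ` is a Generalized Bartlett ordering of `G`: no triangle of `D^σ(G)` consists of three
non-edges of `G`. -/
def IsGBOrdering {n : ℕ} (σ : V ≃ Fin n) (G : SimpleGraph V) : Prop :=
  ¬ ∃ u v w : V,
      ¬ G.Adj u v ∧ ¬ G.Adj v w ∧ ¬ G.Adj u w ∧
      (triangulation σ G).Adj u v ∧ (triangulation σ G).Adj v w ∧
      (triangulation σ G).Adj u w

/-- `G` is a Generalized Bartlett graph: it admits a Generalized Bartlett ordering. -/
def IsGB (G : SimpleGraph V) : Prop :=
  ∃ (n : ℕ) (σ : V ≃ Fin n), IsGBOrdering σ G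

open Matrix
open scoped Classical BigOperators

/-- `N^{≻j} = {i : i > j, (i,j) ∈ E}`. -/
noncomputable def Nset (p : ℕ) (G : SimpleGraph (Fin p)) (j : Fin p) : Finset (Fin p) :=
  Finset.univ.filter fun i : Fin p => j < i ∧ G.Adj i j

/-- `ν_j = |N^{≻j}|`. -/
noncomputable def nuG (p : ℕ) (G : SimpleGraph (Fin p)) (j : Fin p) : ℕ :=
  (Nset p G j).card

/-- `U^{≻j}`: the principal submatrix of `U` with rows and columns indexed by `N^{≻j}`. -/
noncomputable def Usub (p : ℕ) (G : SimpleGraph (Fin p)) (U : Matrix (Fin p) (Fin p) ℝ)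
    (j : Fin p) : Matrix ↥(Nset p G j) ↥(Nset p G j) ℝ :=
  Matrix.of fun a b => U a.1 b.1

/-- `U^{≻}_{·j} = (U_{ij})_{i ∈ N^{≻j}}`. -/
noncomputable def Uvec (p : ℕ) (G : SimpleGraph (Fin p)) (U : Matrix (Fin p) (Fin p) ℝ)
    (j : Fin p) : ↥(Nset p G j) → ℝ :=
  fun a => U a.1 j

/-- `e_j = −(U^{≻j})⁻¹ U^{≻}_{·j}`. -/
noncomputable def evec (p : ℕ) (G : SimpleGraph (Fin p)) (U : Matrix (Fin p) (Fin p) ℝ)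
    (j : Fin p) : ↥(Nset p G j) → ℝ :=
  -((Usub p G U j)⁻¹ *ᵥ Uvec p G U j)

/-- `c_j = U_{jj} − (U^{≻}_{·j})ᵀ (U^{≻j})⁻¹ U^{≻}_{·j}`. -/
noncomputable def cconst (p : ℕ) (G : SimpleGraph (Fin p)) (U : Matrix (Fin p) (Fin p) ℝ)
    (j : Fin p) : ℝ :=
  U j j - Uvec p G U j ⬝ᵥ ((Usub p G U j)⁻¹ *ᵥ Uvec p G U j)

/-- The quadratic form `(L_{I_j} − e_j)ᵀ U^{≻j} (L_{I_j} − e_j)`, where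
`L_{I_j} = (L_{ij})_{i ∈ N^{≻j}}`. -/
noncomputable def Qform (p : ℕ) (G : SimpleGraph (Fin p)) (U : Matrix (Fin p) (Fin p) ℝ)
    (j : Fin p) (L : Matrix (Fin p) (Fin p) ℝ) : ℝ :=
  (fun a : ↥(Nset p G j) => L a.1 j - evec p G U j a) ⬝ᵥ
    (Usub p G U j *ᵥ fun a : ↥(Nset p G j) => L a.1 j - evec p G U j a)

/-- The unnormalized generalized `G`-Wishart density in Cholesky coordinates `(L, D)`:
`(∏_j D_j^{(δ_j+2ν_j)/2}) · exp(−tr(L D Lᵀ U)/2)`. -/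
noncomputable def piStarLD (p : ℕ) (G : SimpleGraph (Fin p)) (U : Matrix (Fin p) (Fin p) ℝ)
    (δ : Fin p → ℝ) (L : Matrix (Fin p) (Fin p) ℝ) (D : Fin p → ℝ) : ℝ :=
  (∏ j : Fin p, D j ^ ((δ j + 2 * (nuG p G j : ℝ)) / 2)) *
    Real.exp (-(L * Matrix.diagonal D * Lᵀ * U).trace / 2)

section AuxGW

open Matrix

variable {p : ℕ} (G : SimpleGraph (Fin p)) (U : Matrix (Fin p) (Fin p) ℝ) (j : Fin p)

lemma Usymm {q : ℕ} {W : Matrix (Fin q) (Fin q) ℝ} (hU : W.PosDef) :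
    ∀ i k, W i k = W k i := fun i k => by
  have := congrFun (congrFun hU.1 k) i
  simpa [Matrix.conjTranspose_apply] using this

lemma mem_Nset_iff {i : Fin p} : i ∈ Nset p G j ↔ j < i ∧ G.Adj i j := by
  simp [Nset]

lemma j_not_mem_Nset : j ∉ Nset p G j := by
  simp [mem_Nset_iff]

/-- Extension of a vector on `Nset` to `Fin p`, with value `t` at `j` and `0` elsewhere. -/
noncomputable def extjv (t : ℝ) (x : ↥(Nset p G j) → ℝ) : Fin p → ℝ :=
  fun i => if h : i ∈ Nset p G j then x ⟨i, h⟩ else if i = j then t else 0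

lemma extjv_dot (t : ℝ) (x : ↥(Nset p G j) → ℝ) (f : Fin p → ℝ) :
    extjv G j t x ⬝ᵥ f = t * f j + ∑ a : ↥(Nset p G j), x a * f a.1 := by
  classical
  have hj : j ∉ Nset p G j := j_not_mem_Nset G j
  rw [dotProduct, ← Finset.sum_subset (Finset.subset_univ (insert j (Nset p G j)))]
  · rw [Finset.sum_insert hj]
    congr 1
    · simp [extjv, hj]
    · rw [← Finset.sum_coe_sort (Nset p G j) (fun i => extjv G j t x i * f i)]
      refine Finset.sum_congr rfl fun a _ => ?_
      simp [extjv, a.2]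
  · intro i _ hi
    have h1 : i ∉ Nset p G j := fun h => hi (Finset.mem_insert_of_mem h)
    have h2 : i ≠ j := fun h => hi (h ▸ Finset.mem_insert_self _ _)
    simp [extjv, h1, h2]

lemma mulVec_extjv (t : ℝ) (x : ↥(Nset p G j) → ℝ) (i : Fin p) :
    (U *ᵥ extjv G j t x) i = t * U i j + ∑ a : ↥(Nset p G j), x a * U i a.1 := by
  have : (U *ᵥ extjv G j t x) i = extjv G j t x ⬝ᵥ (fun k => U i k) := by
    simp [Matrix.mulVec, dotProduct, mul_comm]
  rw [this, extjv_dot]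

lemma extjv_quad (hs : ∀ i k, U i k = U k i) (t : ℝ) (x : ↥(Nset p G j) → ℝ) :
    extjv G j t x ⬝ᵥ (U *ᵥ extjv G j t x)
      = t ^ 2 * U j j + 2 * t * (x ⬝ᵥ Uvec p G U j) + x ⬝ᵥ (Usub p G U j *ᵥ x) := by
  rw [extjv_dot]
  simp only [mulVec_extjv]
  rw [mul_add, Finset.mul_sum]
  have h1 : ∀ a : ↥(Nset p G j),
      x a * (t * U a.1 j + ∑ b : ↥(Nset p G j), x b * U a.1 b.1)
        = t * (x a * Uvec p G U j a) + x a * (Usub p G U j *ᵥ x) a := by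
    intro a
    rw [mul_add, Uvec]
    congr 1
    · ring
    · rw [Matrix.mulVec, dotProduct]
      congr 1
      refine Finset.sum_congr rfl fun b _ => ?_
      simp [Usub, mul_comm]
  rw [Finset.sum_congr rfl fun a _ => h1 a, Finset.sum_add_distrib, ← Finset.mul_sum]
  have h2 : ∀ a : ↥(Nset p G j), x a * U j a.1 = x a * Uvec p G U j a := by
    intro a; rw [Uvec, hs]
  rw [Finset.sum_congr rfl fun a _ => h2 a]
  rw [dotProduct, dotProduct]
  simp only [mul_assoc]
  rw [← Finset.mul_sum]
  ring

lemma Usub_posDef (hU : U.PosDef) : (Usub p G U j).PosDef := by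
  have hs : ∀ i k, U i k = U k i := Usymm hU
  refine Matrix.PosDef.of_dotProduct_mulVec_pos ?_ ?_
  · ext a b
    simp [Matrix.conjTranspose_apply, Usub, hs a.1 b.1]
  · intro x hx
    have hvne : extjv G j 0 x ≠ 0 := by
      intro h
      apply hx
      funext a
      have := congrFun h a.1
      simpa [extjv, a.2] using this
    have h := hU.dotProduct_mulVec_pos hvne
    rw [show star (extjv G j 0 x) = extjv G j 0 x from by simp] at h
    rw [extjv_quad G U j hs 0 x] at h
    simpa [star] using h

lemma complete_square (hU : U.PosDef) (x : ↥(Nset p G j) → ℝ) :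
    (x - evec p G U j) ⬝ᵥ (Usub p G U j *ᵥ (x - evec p G U j)) + cconst p G U j
      = U j j + 2 * (x ⬝ᵥ Uvec p G U j) + x ⬝ᵥ (Usub p G U j *ᵥ x) := by
  classical
  set S := Usub p G U j with hS
  set u := Uvec p G U j with hu
  set e := evec p G U j with he
  have hPD : S.PosDef := Usub_posDef G U j hU
  have hdet : IsUnit S.det := hPD.det_pos.ne'.isUnit
  have hsym : Sᵀ = S := by
    have := hPD.1
    have h2 : S.IsSymm := by simpa [Matrix.conjTranspose] using this
    exact h2
  have hSe : S *ᵥ e = -u := by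
    rw [he, evec, ← hS, ← hu, Matrix.mulVec_neg, Matrix.mulVec_mulVec,
      Matrix.mul_nonsing_inv _ hdet, Matrix.one_mulVec]
  have heSx : ∀ y : ↥(Nset p G j) → ℝ, e ⬝ᵥ (S *ᵥ y) = (-u) ⬝ᵥ y := by
    intro y
    rw [Matrix.dotProduct_mulVec, ← Matrix.mulVec_transpose, hsym, hSe]
  have heu : e ⬝ᵥ u = -(u ⬝ᵥ (S⁻¹ *ᵥ u)) := by
    rw [he, evec, ← hS, ← hu, neg_dotProduct, dotProduct_comm]
  rw [Matrix.mulVec_sub, dotProduct_sub, sub_dotProduct, sub_dotProduct, hSe,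
    heSx, cconst, ← hu, ← hS]
  simp only [neg_dotProduct, dotProduct_neg, heu, dotProduct_comm u x]
  ring

lemma col_eq_extjv (L : Matrix (Fin p) (Fin p) ℝ)
    (hdiag : ∀ i, L i i = 1) (hupper : ∀ i k : Fin p, i < k → L i k = 0)
    (hzero : ∀ i k : Fin p, k < i → ¬ G.Adj i k → L i k = 0) :
    (fun i => L i j) = extjv G j 1 (fun a => L a.1 j) := by
  funext i
  by_cases h : i ∈ Nset p G j
  · simp [extjv, h]
  · by_cases hij : i = j
    · subst hij; simp [extjv, h, hdiag]
    · rw [show extjv G j 1 (fun a => L a.1 j) i = 0 from by simp [extjv, h, hij]]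
      rcases lt_or_gt_of_ne hij with hlt | hgt
      · exact hupper i j hlt
      · have : ¬ G.Adj i j := fun hadj => h ((mem_Nset_iff G j).2 ⟨hgt, hadj⟩)
        exact hzero i j hgt this

lemma col_quad (hU : U.PosDef) (L : Matrix (Fin p) (Fin p) ℝ)
    (hdiag : ∀ i, L i i = 1) (hupper : ∀ i k : Fin p, i < k → L i k = 0)
    (hzero : ∀ i k : Fin p, k < i → ¬ G.Adj i k → L i k = 0) :
    (fun i => L i j) ⬝ᵥ (U *ᵥ fun i => L i j)
      = Qform p G U j L + cconst p G U j := by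
  have hs : ∀ i k, U i k = U k i := Usymm hU
  rw [col_eq_extjv G j L hdiag hupper hzero, extjv_quad G U j hs]
  simp only [one_pow, one_mul, mul_one]
  rw [← complete_square G U j hU (fun a => L a.1 j)]
  rfl

lemma cconst_pos (hU : U.PosDef) : 0 < cconst p G U j := by
  have hs : ∀ i k, U i k = U k i := Usymm hU
  have hvne : extjv G j 1 (evec p G U j) ≠ 0 := by
    intro h
    have := congrFun h j
    simp [extjv, j_not_mem_Nset G j] at this
  have h := hU.dotProduct_mulVec_pos hvne
  rw [show star (extjv G j 1 (evec p G U j)) = extjv G j 1 (evec p G U j) from by simp] at h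
  rw [extjv_quad G U j hs 1 (evec p G U j)] at h
  have h2 := complete_square G U j hU (evec p G U j)
  simp only [one_pow, one_mul, mul_one] at h
  rw [sub_self] at h2
  simp only [Matrix.mulVec_zero, dotProduct_zero, zero_add] at h2
  rw [← h2] at h
  simpa using h

lemma trace_decomp (U : Matrix (Fin p) (Fin p) ℝ) (L : Matrix (Fin p) (Fin p) ℝ)
    (D : Fin p → ℝ) :
    (L * Matrix.diagonal D * Lᵀ * U).trace
      = ∑ m : Fin p, D m * ((fun i => L i m) ⬝ᵥ (U *ᵥ fun i => L i m)) := by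
  classical
  have hA : ∀ i k, (L * Matrix.diagonal D * Lᵀ) i k = ∑ m, L i m * D m * L k m := by
    intro i k
    rw [Matrix.mul_apply]
    refine Finset.sum_congr rfl fun m _ => ?_
    rw [Matrix.mul_diagonal, Matrix.transpose_apply]
  calc (L * Matrix.diagonal D * Lᵀ * U).trace
      = ∑ i, ∑ k, ∑ m, L i m * D m * L k m * U k i := by
        simp only [Matrix.trace, Matrix.diag_apply, Matrix.mul_apply, hA, Finset.sum_mul]
    _ = ∑ i, ∑ m, ∑ k, L i m * D m * L k m * U k i :=
        Finset.sum_congr rfl fun i _ => Finset.sum_comm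
    _ = ∑ m, ∑ i, ∑ k, L i m * D m * L k m * U k i := Finset.sum_comm
    _ = ∑ m : Fin p, D m * ((fun i => L i m) ⬝ᵥ (U *ᵥ fun i => L i m)) := by
        refine Finset.sum_congr rfl fun m _ => ?_
        rw [dotProduct, Finset.mul_sum, Finset.sum_comm]
        refine Finset.sum_congr rfl fun k _ => ?_
        have hUm : (U *ᵥ fun i => L i m) k = ∑ i, U k i * L i m := rfl
        simp only [hUm]
        rw [Finset.mul_sum, Finset.mul_sum]
        refine Finset.sum_congr rfl fun i _ => ?_
        ring

end AuxGW

/-- Theorem 6, factorization part: for a decomposable graph with the identity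
ordering a perfect elimination ordering and `U` positive definite, all `c_j > 0`; the trace
decomposes as `tr(L D Lᵀ U) = ∑_j D_j [(L_{I_j}−e_j)ᵀ U^{≻j} (L_{I_j}−e_j) + c_j]`; hence the
generalized `G`-Wishart density factorizes over `j` into a product of a Gaussian kernel in
`L_{I_j}` given `D_j` (mean `e_j`, covariance `(U^{≻j})⁻¹/D_j`) and a Gamma kernel in `D_j`
with shape `(ν_j+δ_j)/2 + 1` and rate `c_j/2`, so the pairs `(L_{I_j}, D_j)` are mutually
independent. -/
theorem decomposable_gwishart_factorization (p : ℕ) (G : SimpleGraph (Fin p))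
    (hdec : IsDecomposable G)
    (hPEO : IsPerfectElimOrdering (Equiv.refl (Fin p)) G)
    (U : Matrix (Fin p) (Fin p) ℝ) (hU : U.PosDef)
    (δ : Fin p → ℝ) (hδ : ∀ i, 0 < δ i) :
    (∀ j : Fin p, 0 < cconst p G U j) ∧
    (∀ L : Matrix (Fin p) (Fin p) ℝ,
      (∀ i, L i i = 1) → (∀ i j : Fin p, i < j → L i j = 0) →
      (∀ i j : Fin p, j < i → ¬ G.Adj i j → L i j = 0) →
      ∀ D : Fin p → ℝ, (∀ j, 0 < D j) →
        (L * Matrix.diagonal D * Lᵀ * U).trace =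
          ∑ j : Fin p, D j * (Qform p G U j L + cconst p G U j) ∧
        piStarLD p G U δ L D =
          ∏ j : Fin p, D j ^ ((δ j + 2 * (nuG p G j : ℝ)) / 2) *
            Real.exp (-(D j / 2) * (Qform p G U j L + cconst p G U j))) ∧
    (∃ K : Fin p → ℝ, (∀ j, 0 < K j) ∧
      ∀ L : Matrix (Fin p) (Fin p) ℝ,
        (∀ i, L i i = 1) → (∀ i j : Fin p, i < j → L i j = 0) →
        (∀ i j : Fin p, j < i → ¬ G.Adj i j → L i j = 0) →
        ∀ D : Fin p → ℝ, (∀ j, 0 < D j) →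
          piStarLD p G U δ L D =
            ∏ j : Fin p,
              K j *
                (D j ^ ((nuG p G j : ℝ) / 2) *
                  Real.exp (-(D j / 2) * Qform p G U j L)) *
                ProbabilityTheory.gammaPDFReal (((nuG p G j : ℝ) + δ j) / 2 + 1)
                  (cconst p G U j / 2) (D j)) := by
  classical
  have hcpos : ∀ j : Fin p, 0 < cconst p G U j := fun j => cconst_pos G U j hU
  have htr : ∀ L : Matrix (Fin p) (Fin p) ℝ,
      (∀ i, L i i = 1) → (∀ i j : Fin p, i < j → L i j = 0) →
      (∀ i j : Fin p, j < i → ¬ G.Adj i j → L i j = 0) →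
      ∀ D : Fin p → ℝ,
        (L * Matrix.diagonal D * Lᵀ * U).trace =
          ∑ j : Fin p, D j * (Qform p G U j L + cconst p G U j) := by
    intro L h1 h2 h3 D
    rw [trace_decomp U L D]
    exact Finset.sum_congr rfl fun m _ => by
      rw [col_quad G U m hU L h1 h2 h3]
  have hpi : ∀ L : Matrix (Fin p) (Fin p) ℝ,
      (∀ i, L i i = 1) → (∀ i j : Fin p, i < j → L i j = 0) →
      (∀ i j : Fin p, j < i → ¬ G.Adj i j → L i j = 0) →
      ∀ D : Fin p → ℝ,
        piStarLD p G U δ L D =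
          ∏ j : Fin p, D j ^ ((δ j + 2 * (nuG p G j : ℝ)) / 2) *
            Real.exp (-(D j / 2) * (Qform p G U j L + cconst p G U j)) := by
    intro L h1 h2 h3 D
    rw [piStarLD, htr L h1 h2 h3 D]
    have hsum : -(∑ j : Fin p, D j * (Qform p G U j L + cconst p G U j)) / 2
        = ∑ j : Fin p, -(D j / 2) * (Qform p G U j L + cconst p G U j) := by
      rw [neg_div, Finset.sum_div, ← neg_one_mul, Finset.mul_sum]
      exact Finset.sum_congr rfl fun j _ => by ring
    rw [hsum, Real.exp_sum, ← Finset.prod_mul_distrib]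
  refine ⟨hcpos, fun L h1 h2 h3 D hD => ⟨htr L h1 h2 h3 D, hpi L h1 h2 h3 D⟩, ?_⟩
  refine ⟨fun j => Real.Gamma (((nuG p G j : ℝ) + δ j) / 2 + 1) /
      (cconst p G U j / 2) ^ (((nuG p G j : ℝ) + δ j) / 2 + 1), ?_, ?_⟩
  · intro j
    have ha : (0 : ℝ) < ((nuG p G j : ℝ) + δ j) / 2 + 1 := by
      have : (0 : ℝ) ≤ (nuG p G j : ℝ) := Nat.cast_nonneg _
      have := hδ j
      linarith
    have hr : (0 : ℝ) < cconst p G U j / 2 := by linarith [hcpos j]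
    exact div_pos (Real.Gamma_pos_of_pos ha) (Real.rpow_pos_of_pos hr _)
  · intro L h1 h2 h3 D hD
    rw [hpi L h1 h2 h3 D]
    refine Finset.prod_congr rfl fun j _ => ?_
    set a : ℝ := ((nuG p G j : ℝ) + δ j) / 2 + 1 with ha_def
    have ha : (0 : ℝ) < a := by
      have h0 : (0 : ℝ) ≤ (nuG p G j : ℝ) := Nat.cast_nonneg _
      have := hδ j
      rw [ha_def]; linarith
    have hΓ : 0 < Real.Gamma a := Real.Gamma_pos_of_pos ha
    have hr : (0 : ℝ) < cconst p G U j / 2 := by linarith [hcpos j]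
    have hrp : 0 < (cconst p G U j / 2) ^ a := Real.rpow_pos_of_pos hr a
    rw [ProbabilityTheory.gammaPDFReal, if_pos (hD j).le]
    have hXY : D j ^ ((nuG p G j : ℝ) / 2) * D j ^ (a - 1)
        = D j ^ ((δ j + 2 * (nuG p G j : ℝ)) / 2) := by
      rw [← Real.rpow_add (hD j)]
      congr 1
      rw [ha_def]; ring
    have hE : Real.exp (-(D j / 2) * Qform p G U j L) *
        Real.exp (-(cconst p G U j / 2 * D j))
        = Real.exp (-(D j / 2) * (Qform p G U j L + cconst p G U j)) := by
      rw [← Real.exp_add]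
      congr 1
      ring
    rw [← hXY, ← hE]
    have hK1 : Real.Gamma a / (cconst p G U j / 2) ^ a *
        ((cconst p G U j / 2) ^ a / Real.Gamma a) = 1 := by
      field_simp
    calc D j ^ ((nuG p G j : ℝ) / 2) * D j ^ (a - 1) *
          (Real.exp (-(D j / 2) * Qform p G U j L) *
            Real.exp (-(cconst p G U j / 2 * D j)))
        = (Real.Gamma a / (cconst p G U j / 2) ^ a *
            ((cconst p G U j / 2) ^ a / Real.Gamma a)) *
          (D j ^ ((nuG p G j : ℝ) / 2) * D j ^ (a - 1) *
            (Real.exp (-(D j / 2) * Qform p G U j L) *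
              Real.exp (-(cconst p G U j / 2 * D j)))) := by rw [hK1, one_mul]
      _ = Real.Gamma a / (cconst p G U j / 2) ^ a *
            (D j ^ ((nuG p G j : ℝ) / 2) * Real.exp (-(D j / 2) * Qform p G U j L)) *
            ((cconst p G U j / 2) ^ a / Real.Gamma a * D j ^ (a - 1) *
              Real.exp (-(cconst p G U j / 2 * D j))) := by ring
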